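/- arXiv:1306.0438 — 5 statements merged into one kernel-verified Lean document; each statement's English description precedes it below -/
import Mathlib

section
/- Let $u,v$ be positive integers, let $A$ be a $u \times v$ matrix over $\mathbb{Q}$, and let $b$ be a positive rational. Then the matrix $(A \; -bI_u)$ is kernel partition regular if and only if the $(v+u) \times v$ matrix $\binom{bI_v}{A}$ (the rows of $b$ times the $v\times v$ identity stacked above the rows of $A$) is image partition regular. -/
open Matrix

/-- `M` is kernel partition regular: for every finite colouring of the positive
integers there is a monochromatic vector of positive integers in the kernel. -/
def KPR {u : ℕ} {n : Type} [Fintype n] (M : Matrix (Fin u) n ℚ) : Prop :=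
  ∀ (r : ℕ) (φ : ℕ → Fin r), ∃ x : n → ℕ,
    (∀ i, 0 < x i) ∧ (∀ i j, φ (x i) = φ (x j)) ∧
    M.mulVec (fun i => (x i : ℚ)) = 0

/-- `B` is image partition regular: for every finite colouring of the positive
integers there is `x` with positive integer entries such that the entries of
`B *ᵥ x` are positive integers of the same colour. -/
def IPR {m : Type} {v : ℕ} (B : Matrix m (Fin v) ℚ) : Prop :=
  ∀ (r : ℕ) (φ : ℕ → Fin r), ∃ x : Fin v → ℕ, (∀ j, 0 < x j) ∧
    ∃ y : m → ℕ, (∀ i, 0 < y i) ∧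
      (∀ i, (y i : ℚ) = B.mulVec (fun j => (x j : ℚ)) i) ∧
      ∀ i i', φ (y i) = φ (y i')

theorem stmt_4 (u v : ℕ) (hu : 0 < u) (hv : 0 < v) (A : Matrix (Fin u) (Fin v) ℚ)
    (b : ℚ) (hb : 0 < b) :
    KPR (Matrix.fromCols A (-b • (1 : Matrix (Fin u) (Fin u) ℚ))) ↔
      IPR (Matrix.fromRows (b • (1 : Matrix (Fin v) (Fin v) ℚ)) A) := by
  have hbnum : (0:ℤ) < b.num := Rat.num_pos.mpr hb
  set p : ℕ := b.num.toNat with hp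
  set q : ℕ := b.den with hq
  have hppos : 0 < p := by omega
  have hqpos : 0 < q := b.pos
  have hpq : (p : ℚ) = b * (q : ℚ) := by
    have hd : ((b.den : ℚ)) ≠ 0 := Nat.cast_ne_zero.mpr b.pos.ne'
    have h0 : ((b.num : ℚ)) = b * (b.den : ℚ) := (div_eq_iff hd).mp (Rat.num_div_den b)
    rw [hp, hq, ← h0]
    exact_mod_cast congrArg (fun z : ℤ => (z : ℚ)) (Int.toNat_of_nonneg hbnum.le)
  constructor
  · intro h r φ
    obtain ⟨z, hzpos, hzmono, hzker⟩ := h r (fun n => φ (p * n))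
    -- kernel equation: A *ᵥ (z∘inl) = b • (z∘inr)
    have hkey : ∀ i, A.mulVec (fun j => (z (Sum.inl j) : ℚ)) i
        = b * (z (Sum.inr i) : ℚ) := by
      intro i
      have := congrFun hzker i
      have hrw : (fun k : Fin v ⊕ Fin u => ((z k : ℕ) : ℚ))
          = Sum.elim (fun j => ((z (Sum.inl j) : ℕ) : ℚ))
              (fun j => ((z (Sum.inr j) : ℕ) : ℚ)) := by
        funext k; cases k <;> rfl
      rw [hrw, fromCols_mulVec_sumElim] at this
      simp only [Pi.add_apply, Pi.zero_apply, neg_mulVec, smul_mulVec, one_mulVec,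
        Pi.smul_apply, smul_eq_mul, neg_mul, neg_smul, Pi.neg_apply] at this
      linarith [this]
    refine ⟨fun j => q * z (Sum.inl j), fun j => Nat.mul_pos hqpos (hzpos _),
      fun i => p * z i, fun i => Nat.mul_pos hppos (hzpos _), ?_, ?_⟩
    · intro i
      cases i with
      | inl j =>
        simp only [fromRows_mulVec, Sum.elim_inl, smul_mulVec, one_mulVec,
          Pi.smul_apply, smul_eq_mul]
        push_cast
        rw [hpq]; ring
      | inr i =>
        simp only [fromRows_mulVec, Sum.elim_inr]
        have : A.mulVec (fun j => ((q * z (Sum.inl j) : ℕ) : ℚ)) i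
            = q * A.mulVec (fun j => (z (Sum.inl j) : ℚ)) i := by
          simp [mulVec, dotProduct, Finset.mul_sum]
          congr 1; funext j; push_cast; ring
        rw [this, hkey]
        push_cast
        rw [hpq]; ring
    · intro i i'
      exact hzmono i i'
  · intro h r φ
    obtain ⟨x, hx, y, hy, hyeq, hymono⟩ := h r φ
    refine ⟨y, hy, hymono, ?_⟩
    funext i
    have hrw : (fun k : Fin v ⊕ Fin u => ((y k : ℕ) : ℚ))
        = Sum.elim (fun j => ((y (Sum.inl j) : ℕ) : ℚ))
            (fun j => ((y (Sum.inr j) : ℕ) : ℚ)) := by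
      funext k; cases k <;> rfl
    rw [hrw, fromCols_mulVec_sumElim]
    have h1 : ∀ j, ((y (Sum.inl j) : ℕ) : ℚ) = b * (x j : ℚ) := by
      intro j
      have := hyeq (Sum.inl j)
      simpa [fromRows_mulVec, smul_mulVec, one_mulVec] using this
    have h2 : ∀ i, ((y (Sum.inr i) : ℕ) : ℚ)
        = A.mulVec (fun j => (x j : ℚ)) i := by
      intro i
      simpa [fromRows_mulVec] using hyeq (Sum.inr i)
    simp only [Pi.add_apply, Pi.zero_apply, neg_mulVec, smul_mulVec, one_mulVec,
      neg_smul, Pi.neg_apply, Pi.smul_apply, smul_eq_mul]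
    have : A.mulVec (fun j => ((y (Sum.inl j) : ℕ) : ℚ)) i
        = b * A.mulVec (fun j => (x j : ℚ)) i := by
      simp only [mulVec, dotProduct, Finset.mul_sum]
      congr 1; funext j; rw [h1]; ring
    rw [this, h2 i]; ring
end

section
/- The $2 \times 3$ matrix $A = \begin{pmatrix} 4 & -4 & 2 \\ 5 & -5 & 3 \end{pmatrix}$ is doubly image partition regular, but there is no positive integer $b$ such that the matrix $(A \; -bI_2)$ is kernel partition regular. -/
open Matrix

/-- `A` is doubly image partition regular: for every finite colouring of the
positive integers there is `x` with positive integer entries, monochromatic,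
such that the entries of `A *ᵥ x` are positive integers which are
monochromatic (possibly of another colour). -/
def DoublyIPR {u v : ℕ} (A : Matrix (Fin u) (Fin v) ℚ) : Prop :=
  ∀ (r : ℕ) (φ : ℕ → Fin r), ∃ x : Fin v → ℕ,
    (∀ i, 0 < x i) ∧ (∀ i j, φ (x i) = φ (x j)) ∧
    ∃ y : Fin u → ℕ, (∀ i, 0 < y i) ∧
      (∀ i, (y i : ℚ) = A.mulVec (fun j => (x j : ℚ)) i) ∧
      ∀ i j, φ (y i) = φ (y j)

/-! ### Auxiliary combinatorial results -/

open Combinatorics Finset in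
/-- Finitary van der Waerden with a uniform bound, from Hales–Jewett. -/
theorem aux_vdw_fin (R : Type) [Fintype R] (L : ℕ) :
    ∃ W : ℕ, ∀ κ : ℕ → R, ∃ a d : ℕ, 0 < a ∧ 0 < d ∧ a ≤ W ∧ d ≤ W ∧
      ∀ t ≤ L, κ (a + t * d) = κ a := by
  classical
  obtain ⟨ι, _inst, hι⟩ := Line.exists_mono_in_high_dimension (Fin (L + 1)) R
  refine ⟨1 + Fintype.card ι * (L + 1), fun κ => ?_⟩
  set C : (ι → Fin (L + 1)) → R := fun w => κ (1 + ∑ i, (w i : ℕ)) with hC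
  obtain ⟨l, c, hl⟩ := hι C
  set s : Finset ι := Finset.univ.filter (fun i => l.idxFun i = none) with hs
  set F : ℕ := ∑ i ∈ sᶜ, ((l.idxFun i).map (fun (a : Fin (L+1)) => (a : ℕ))).getD 0 with hF
  have key : ∀ x : Fin (L + 1), 1 + ∑ i, ((l x) i : ℕ) = (1 + F) + (x : ℕ) * s.card := by
    intro x
    have hsplit : ∑ i, ((l x) i : ℕ) = (∑ i ∈ s, ((l x) i : ℕ)) + ∑ i ∈ sᶜ, ((l x) i : ℕ) :=
      (Finset.sum_add_sum_compl s _).symm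
    rw [hsplit]
    have h1 : ∀ i ∈ s, ((l x) i : ℕ) = (x : ℕ) := by
      intro i hi
      rw [hs, Finset.mem_filter] at hi
      simp [Line.coe_apply, hi.2]
    have h2 : ∀ i ∈ sᶜ, ((l x) i : ℕ)
        = ((l.idxFun i).map (fun (a : Fin (L+1)) => (a : ℕ))).getD 0 := by
      intro i hi
      rw [hs] at hi
      simp only [Finset.mem_compl, Finset.mem_filter, Finset.mem_univ, true_and] at hi
      cases h : l.idxFun i with
      | none => exact absurd h hi
      | some a => simp [Line.coe_apply, h]
    have hA : (∑ i ∈ s, ((l x) i : ℕ)) = s.card * (x : ℕ) := by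
      rw [Finset.sum_congr rfl h1, Finset.sum_const, smul_eq_mul]
    have hB : (∑ i ∈ sᶜ, ((l x) i : ℕ)) = F := by
      rw [Finset.sum_congr rfl h2]
    rw [hA, hB]
    ring
  have scard_pos : 0 < s.card := by
    obtain ⟨i, hi⟩ := l.proper
    exact Finset.card_pos.mpr ⟨i, by simp [hs, hi]⟩
  have hFb : F ≤ Fintype.card ι * L := by
    calc F ≤ ∑ _i ∈ sᶜ, L := by
              refine Finset.sum_le_sum fun i _ => ?_
              cases h : l.idxFun i with
              | none => simp
              | some a => simpa [h] using Nat.lt_succ_iff.mp a.2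
      _ ≤ Fintype.card ι * L := by
              rw [Finset.sum_const, smul_eq_mul]
              exact Nat.mul_le_mul_right _ (Finset.card_le_univ _)
  have hc1 : Fintype.card ι ≤ Fintype.card ι * (L + 1) :=
    Nat.le_mul_of_pos_right _ (by omega)
  have hc2 : Fintype.card ι * L ≤ Fintype.card ι * (L + 1) :=
    Nat.mul_le_mul_left _ (by omega)
  have hsc : s.card ≤ Fintype.card ι := Finset.card_le_univ _
  refine ⟨1 + F, s.card, by omega, scard_pos, by omega, by omega, ?_⟩
  intro t ht
  have e1 := hl (⟨t, by omega⟩ : Fin (L + 1))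
  have e0 := hl (⟨0, by omega⟩ : Fin (L + 1))
  rw [hC] at e1 e0
  simp only at e1 e0
  rw [key] at e1 e0
  simp only [Fin.val_mk] at e1 e0
  rw [zero_mul, add_zero] at e0
  rw [e1, e0]

/-- A Deuber-style tower of nested monochromatic structures. -/
theorem aux_tower (R : Type) [Fintype R] :
    ∀ m : ℕ, ∃ N : ℕ, ∀ κ : ℕ → R, ∃ (d : ℕ → ℕ) (X : ℕ → R),
      (∀ i, i < m → 0 < d i ∧ d i ≤ N) ∧
      (∀ i, i < m → κ (4 * d i) = X i) ∧
      (∀ i j, i < j → j < m → ∀ l, l ≤ 6 → κ (4 * d i + l * d j) = X i) := by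
  intro m
  induction m with
  | zero => exact ⟨1, fun κ => ⟨fun _ => 1, fun _ => κ 0, by omega, by omega, by omega⟩⟩
  | succ m ih =>
    obtain ⟨N, hN⟩ := ih
    obtain ⟨W, hW⟩ := aux_vdw_fin R (6 * N)
    refine ⟨W + 4 * W * N + 1, fun κ => ?_⟩
    obtain ⟨a, δ, ha, hδ, haW, hδW, hmono⟩ := hW (fun n => κ (4 * n))
    obtain ⟨d', X', hb', hpure', hcross'⟩ := hN (fun n => κ (4 * δ * n))
    refine ⟨fun i => match i with | 0 => a | Nat.succ k => 4 * δ * d' k,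
           fun i => match i with | 0 => κ (4 * a) | Nat.succ k => X' k, ?_, ?_, ?_⟩
    · rintro (_ | k) hi
      · refine ⟨ha, by nlinarith⟩
      · have hk : k < m := by omega
        obtain ⟨h1, h2⟩ := hb' k hk
        refine ⟨by positivity, by nlinarith⟩
    · rintro (_ | k) hi
      · rfl
      · have hk : k < m := by omega
        have h := hpure' k hk
        show κ (4 * (4 * δ * d' k)) = X' k
        calc κ (4 * (4 * δ * d' k)) = κ (4 * δ * (4 * d' k)) := by ring_nf
          _ = X' k := h
    · rintro (_ | i) (_ | j) hij hj l hl
      · omega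
      · have hj' : j < m := by omega
        have hdb := (hb' j hj').2
        show κ (4 * a + l * (4 * δ * d' j)) = κ (4 * a)
        have harg : 4 * a + l * (4 * δ * d' j) = 4 * (a + (l * d' j) * δ) := by ring
        rw [harg]
        exact hmono (l * d' j) (by nlinarith)
      · omega
      · have hij' : i < j := by omega
        have hj' : j < m := by omega
        have h := hcross' i j hij' hj' l hl
        show κ (4 * (4 * δ * d' i) + l * (4 * δ * d' j)) = X' i
        calc κ (4 * (4 * δ * d' i) + l * (4 * δ * d' j))
            = κ (4 * δ * (4 * d' i + l * d' j)) := by ring_nf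
          _ = X' i := h

open Finset in
theorem aux_three_pigeon (R : Type) [Fintype R] (X : ℕ → R) :
    ∃ i j k : ℕ, i < j ∧ j < k ∧ k < 2 * Fintype.card R + 1 ∧ X i = X j ∧ X j = X k := by
  classical
  set n := 2 * Fintype.card R + 1 with hn
  have hcard : Fintype.card R * 2 < Fintype.card (Fin n) := by simp [hn]; omega
  obtain ⟨y, hy⟩ := Fintype.exists_lt_card_fiber_of_mul_lt_card
    (fun i : Fin n => X (i : ℕ)) hcard
  set s : Finset (Fin n) := Finset.univ.filter (fun i => X (i : ℕ) = y) with hs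
  have hy' : 2 < s.card := by
    simpa [hs, Set.toFinset] using hy
  have hne1 : s.Nonempty := Finset.card_pos.mp (by omega)
  set i := s.min' hne1 with hi
  have his : i ∈ s := Finset.min'_mem _ _
  set s1 := s.erase i with hs1
  have hne2 : s1.Nonempty := by
    refine Finset.card_pos.mp ?_
    rw [hs1, Finset.card_erase_of_mem his]; omega
  set j := s1.min' hne2 with hj
  have hjs1 : j ∈ s1 := Finset.min'_mem _ _
  set s2 := s1.erase j with hs2
  have hne3 : s2.Nonempty := by
    refine Finset.card_pos.mp ?_
    rw [hs2, Finset.card_erase_of_mem hjs1, hs1, Finset.card_erase_of_mem his]; omega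
  set k := s2.min' hne3 with hk
  have hks2 : k ∈ s2 := Finset.min'_mem _ _
  have hjs : j ∈ s := Finset.mem_of_mem_erase hjs1
  have hks : k ∈ s := Finset.mem_of_mem_erase (Finset.mem_of_mem_erase hks2)
  have hij : i < j := by
    have := Finset.min'_le s j hjs
    have hne : j ≠ i := Finset.ne_of_mem_erase hjs1
    omega
  have hjk : j < k := by
    have := Finset.min'_le s1 k (Finset.mem_of_mem_erase hks2)
    have hne : k ≠ j := Finset.ne_of_mem_erase hks2
    omega
  have hXi : X (i : ℕ) = y := (Finset.mem_filter.mp his).2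
  have hXj : X (j : ℕ) = y := (Finset.mem_filter.mp hjs).2
  have hXk : X (k : ℕ) = y := (Finset.mem_filter.mp hks).2
  exact ⟨i, j, k, by exact_mod_cast hij, by exact_mod_cast hjk, k.2, by rw [hXi, hXj],
    by rw [hXj, hXk]⟩

/-- The key monochromatic configuration (a special case of Deuber's theorem). -/
theorem aux_lemL (R : Type) [Fintype R] (κ : ℕ → R) :
    ∃ S E U : ℕ, 0 < S ∧ 0 < E ∧ 0 < U ∧
      κ (4 * S + 2 * E) = κ (4 * S) ∧ κ (4 * E + U) = κ (4 * S) ∧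
      κ (4 * E + 6 * U) = κ (4 * S) ∧ κ (4 * U) = κ (4 * S) := by
  obtain ⟨N, hN⟩ := aux_tower R (2 * Fintype.card R + 1)
  obtain ⟨d, X, hb, hpure, hcross⟩ := hN κ
  obtain ⟨i, j, k, hij, hjk, hkm, hXij, hXjk⟩ := aux_three_pigeon R X
  have hjm : j < 2 * Fintype.card R + 1 := by omega
  have him : i < 2 * Fintype.card R + 1 := by omega
  refine ⟨d i, d j, d k, (hb i him).1, (hb j hjm).1, (hb k hkm).1, ?_, ?_, ?_, ?_⟩
  · rw [hcross i j hij hjm 2 (by omega), hpure i him]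
  · have h := hcross j k hjk hkm 1 (by omega)
    rw [one_mul] at h
    rw [h, hpure i him, hXij]
  · rw [hcross j k hjk hkm 6 (by omega), hpure i him, hXij]
  · have h := hpure k hkm
    rw [h, hpure i him, hXij, hXjk]

/-- The matrix `(4 -4 2; 5 -5 3)` is doubly image partition regular. -/
theorem aux_part1 : DoublyIPR !![(4 : ℚ), -4, 2; 5, -5, 3] := by
  intro r φ
  set κ : ℕ → Fin r × Option (Fin r) :=
    fun n => (φ n, if n % 2 = 0 then some (φ (n / 2)) else none) with hκ
  obtain ⟨S, E, U, hS, hE, hU, h1, h2, h3, h4⟩ := aux_lemL (Fin r × Option (Fin r)) κ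
  have p1 : φ (4 * S + 2 * E) = φ (4 * S) := congrArg Prod.fst h1
  have p2 : φ (4 * E + U) = φ (4 * S) := congrArg Prod.fst h2
  have p3 : φ (2 * E + 3 * U) = φ (2 * U) := by
    have h34 : κ (4 * E + 6 * U) = κ (4 * U) := h3.trans h4.symm
    have q := congrArg Prod.snd h34
    simp only [hκ] at q
    rw [if_pos (by omega : (4 * E + 6 * U) % 2 = 0),
        if_pos (by omega : (4 * U) % 2 = 0)] at q
    have e1 : (4 * E + 6 * U) / 2 = 2 * E + 3 * U := by omega
    have e2 : (4 * U) / 2 = 2 * U := by omega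
    rw [e1, e2] at q
    exact Option.some.inj q
  refine ⟨![4 * S, 4 * S + 2 * E, 4 * E + U], ?_, ?_,
    ![2 * U, 2 * E + 3 * U], ?_, ?_, ?_⟩
  · intro i; fin_cases i <;> simp <;> omega
  · have key : ∀ i : Fin 3, φ (![4 * S, 4 * S + 2 * E, 4 * E + U] i) = φ (4 * S) := by
      intro i; fin_cases i <;> simpa using by first | rfl | exact p1 | exact p2
    intro i j; rw [key i, key j]
  · intro i; fin_cases i <;> simp <;> omega
  · intro i
    fin_cases i <;>
      simp [Matrix.mulVec, dotProduct, Fin.sum_univ_succ] <;> push_cast <;> ring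
  · have key : ∀ i : Fin 2, φ (![2 * U, 2 * E + 3 * U] i) = φ (2 * U) := by
      intro i; fin_cases i <;> simpa using by first | rfl | exact p3
    intro i j; rw [key i, key j]

/-- The number-theoretic core of the negative result. -/
theorem aux_NTcore (p b : ℕ) (hp : p.Prime) (hb : 0 < b) (hpb : 5 * b + 3 ≤ p)
    (n₁ n₂ n₃ : ℕ) (h₁ : 0 < n₁) (h₂ : 0 < n₂) (h₃ : 0 < n₃)
    (hc12 : ordCompl[p] n₁ % p = ordCompl[p] n₂ % p)
    (hc13 : ordCompl[p] n₁ % p = ordCompl[p] n₃ % p)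
    (heq : 2 * n₁ + 5 * b * n₂ = 4 * b * n₃) : False := by
  haveI : Fact p.Prime := ⟨hp⟩
  haveI : NeZero p := ⟨hp.pos.ne'⟩
  set v₁ := n₁.factorization p with hv₁
  set v₂ := n₂.factorization p with hv₂
  set v₃ := n₃.factorization p with hv₃
  set c₁ := ordCompl[p] n₁ with hc₁
  set c₂ := ordCompl[p] n₂ with hc₂
  set c₃ := ordCompl[p] n₃ with hc₃
  have hn₁ : n₁ = p ^ v₁ * c₁ := (Nat.ordProj_mul_ordCompl_eq_self n₁ p).symm
  have hn₂ : n₂ = p ^ v₂ * c₂ := (Nat.ordProj_mul_ordCompl_eq_self n₂ p).symm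
  have hn₃ : n₃ = p ^ v₃ * c₃ := (Nat.ordProj_mul_ordCompl_eq_self n₃ p).symm
  set m := min v₁ (min v₂ v₃) with hm
  have hw₁ : v₁ = m + (v₁ - m) := by omega
  have hw₂ : v₂ = m + (v₂ - m) := by omega
  have hw₃ : v₃ = m + (v₃ - m) := by omega
  set w₁ := v₁ - m with hww₁
  set w₂ := v₂ - m with hww₂
  set w₃ := v₃ - m with hww₃
  have heq2 : p ^ m * (2 * (p ^ w₁ * c₁) + 5 * b * (p ^ w₂ * c₂))
      = p ^ m * (4 * b * (p ^ w₃ * c₃)) := by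
    rw [hn₁, hw₁] at heq
    rw [hn₂, hw₂] at heq
    rw [hn₃, hw₃] at heq
    rw [pow_add, pow_add, pow_add] at heq
    ring_nf at heq ⊢
    linarith [heq]
  have heq3 : 2 * (p ^ w₁ * c₁) + 5 * b * (p ^ w₂ * c₂) = 4 * b * (p ^ w₃ * c₃) :=
    Nat.eq_of_mul_eq_mul_left (pow_pos hp.pos m) heq2
  set γ : ZMod p := ((c₁ : ℕ) : ZMod p) with hγ
  have hγeq2 : ((c₂ : ℕ) : ZMod p) = γ := by
    rw [hγ, ← ZMod.natCast_mod c₂ p, ← ZMod.natCast_mod c₁ p, hc12]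
  have hγeq3 : ((c₃ : ℕ) : ZMod p) = γ := by
    rw [hγ, ← ZMod.natCast_mod c₃ p, ← ZMod.natCast_mod c₁ p, hc13]
  have hγne : γ ≠ 0 := by
    rw [hγ, Ne, ZMod.natCast_eq_zero_iff]
    exact Nat.not_dvd_ordCompl hp h₁.ne'
  have hp0 : ((p : ℕ) : ZMod p) = 0 := ZMod.natCast_self p
  have key : ∀ A B : ℕ, A < p → B < p → ((A : ZMod p) * γ = (B : ZMod p) * γ) → A = B := by
    intro A B hA hB h
    have h2 := mul_right_cancel₀ hγne h
    have := congrArg ZMod.val h2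
    rwa [ZMod.val_cast_of_lt hA, ZMod.val_cast_of_lt hB] at this
  have hcast := congrArg (fun t : ℕ => (t : ZMod p)) heq3
  push_cast at hcast
  rw [hγeq2, hγeq3] at hcast
  rcases eq_or_ne w₁ 0 with e1 | e1 <;> rcases eq_or_ne w₂ 0 with e2 | e2 <;>
      rcases eq_or_ne w₃ 0 with e3 | e3
  · rw [e1, e2, e3, pow_zero] at hcast
    have := key (2 + 5 * b) (4 * b) (by omega) (by omega)
      (by push_cast; linear_combination hcast)
    omega
  · rw [e1, e2, pow_zero] at hcast
    rw [show ((p:ℕ) : ZMod p) ^ w₃ = 0 by rw [hp0]; exact zero_pow e3] at hcast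
    have := key (2 + 5 * b) 0 (by omega) (by omega)
      (by push_cast; linear_combination hcast)
    omega
  · rw [e1, e3, pow_zero] at hcast
    rw [show ((p:ℕ) : ZMod p) ^ w₂ = 0 by rw [hp0]; exact zero_pow e2] at hcast
    have := key 2 (4 * b) (by omega) (by omega)
      (by push_cast; linear_combination hcast)
    omega
  · rw [e1, pow_zero] at hcast
    rw [show ((p:ℕ) : ZMod p) ^ w₂ = 0 by rw [hp0]; exact zero_pow e2] at hcast
    rw [show ((p:ℕ) : ZMod p) ^ w₃ = 0 by rw [hp0]; exact zero_pow e3] at hcast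
    have := key 2 0 (by omega) (by omega)
      (by push_cast; linear_combination hcast)
    omega
  · rw [e2, e3, pow_zero] at hcast
    rw [show ((p:ℕ) : ZMod p) ^ w₁ = 0 by rw [hp0]; exact zero_pow e1] at hcast
    have := key (5 * b) (4 * b) (by omega) (by omega)
      (by push_cast; linear_combination hcast)
    omega
  · rw [e2, pow_zero] at hcast
    rw [show ((p:ℕ) : ZMod p) ^ w₁ = 0 by rw [hp0]; exact zero_pow e1] at hcast
    rw [show ((p:ℕ) : ZMod p) ^ w₃ = 0 by rw [hp0]; exact zero_pow e3] at hcast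
    have := key (5 * b) 0 (by omega) (by omega)
      (by push_cast; linear_combination hcast)
    omega
  · rw [e3, pow_zero] at hcast
    rw [show ((p:ℕ) : ZMod p) ^ w₁ = 0 by rw [hp0]; exact zero_pow e1] at hcast
    rw [show ((p:ℕ) : ZMod p) ^ w₂ = 0 by rw [hp0]; exact zero_pow e2] at hcast
    have := key 0 (4 * b) (by omega) (by omega)
      (by push_cast; linear_combination hcast)
    omega
  · omega

/-- No matrix `(A  -bI)` is kernel partition regular. -/
theorem aux_part2 : ∀ b : ℕ, 0 < b →
    ¬ KPR (Matrix.fromCols !![(4 : ℚ), -4, 2; 5, -5, 3]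
        (-(b : ℚ) • (1 : Matrix (Fin 2) (Fin 2) ℚ))) := by
  intro b hb hK
  obtain ⟨p, hple, hp⟩ := Nat.exists_infinite_primes (5 * b + 3)
  set φ : ℕ → Fin p := fun n => ⟨(ordCompl[p] n) % p, Nat.mod_lt _ hp.pos⟩ with hφ
  obtain ⟨x, hpos, hmono, hx⟩ := hK p φ
  have h0 := congrFun hx 0
  have h1 := congrFun hx 1
  simp only [Matrix.mulVec, dotProduct, Fintype.sum_sum_type, Fin.sum_univ_succ,
    Fin.sum_univ_zero, Matrix.fromCols_apply_inl, Matrix.fromCols_apply_inr,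
    Matrix.smul_apply, Matrix.one_apply, Matrix.cons_val', Matrix.cons_val_zero,
    Matrix.cons_val_one, Matrix.head_cons, Matrix.empty_val', Matrix.cons_val_fin_one,
    Matrix.head_fin_const, Pi.zero_apply, smul_eq_mul] at h0 h1
  norm_num at h0 h1
  have e1 : (![(4:ℚ), -4, 2] 2) = 2 := by simp
  have e2 : (![(5:ℚ), -5, 3] 2) = 3 := by simp
  rw [e1] at h0
  rw [e2] at h1
  have hqeq : (2 * (x (Sum.inl 2) : ℚ) + 5 * b * (x (Sum.inr 0) : ℚ))
      = 4 * b * (x (Sum.inr 1) : ℚ) := by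
    linear_combination 4 * h1 - 5 * h0
  have hneq : 2 * x (Sum.inl 2) + 5 * b * x (Sum.inr 0) = 4 * b * x (Sum.inr 1) := by
    exact_mod_cast hqeq
  have hm12 := hmono (Sum.inl 2) (Sum.inr 0)
  have hm13 := hmono (Sum.inl 2) (Sum.inr 1)
  have hc12 : ordCompl[p] (x (Sum.inl 2)) % p = ordCompl[p] (x (Sum.inr 0)) % p :=
    congrArg Fin.val hm12
  have hc13 : ordCompl[p] (x (Sum.inl 2)) % p = ordCompl[p] (x (Sum.inr 1)) % p :=
    congrArg Fin.val hm13
  exact aux_NTcore p b hp hb hple _ _ _ (hpos _) (hpos _) (hpos _) hc12 hc13 hneq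

theorem stmt_6 :
    DoublyIPR !![(4 : ℚ), -4, 2; 5, -5, 3] ∧
      ∀ b : ℕ, 0 < b →
        ¬ KPR (Matrix.fromCols !![(4 : ℚ), -4, 2; 5, -5, 3]
            (-(b : ℚ) • (1 : Matrix (Fin 2) (Fin 2) ℚ))) := by
  exact ⟨aux_part1, aux_part2⟩
end

section
/- The $2\times 2$ diagonal matrix $\begin{pmatrix} 1 & 0 \\ 0 & 2 \end{pmatrix}$ is image partition regular but not doubly image partition regular. (For non-double IPR: colour each positive integer $n$ by the parity of $\lfloor \log_2 n \rfloor$; then there is no $\vec x \in \mathbb{N}^2$ with $x_1, x_2$ the same colour and $x_1, 2x_2$ the same colour.) -/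
open Matrix

theorem stmt_10 :
    IPR !![(1 : ℚ), 0; 0, 2] ∧ ¬ DoublyIPR !![(1 : ℚ), 0; 0, 2] := by
  constructor
  · intro r φ
    refine ⟨![2, 1], ?_, ![2, 2], ?_, ?_, ?_⟩
    · intro j; fin_cases j <;> norm_num
    · intro i; fin_cases i <;> norm_num
    · intro i; fin_cases i <;>
        simp [Matrix.mulVec, dotProduct, Fin.sum_univ_two] <;> norm_num
    · intro i i'; fin_cases i <;> fin_cases i' <;> rfl
  · open Fin.NatCast in
    intro h
    obtain ⟨x, hx, hmono, y, hy, heq, ymono⟩ :=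
      h 2 (fun n => (Nat.log 2 n : Fin 2))
    have h0 : y 0 = x 0 := by
      have := heq 0
      simp [Matrix.mulVec, dotProduct, Fin.sum_univ_two] at this
      exact_mod_cast this
    have h1 : y 1 = 2 * x 1 := by
      have := heq 1
      simp [Matrix.mulVec, dotProduct, Fin.sum_univ_two] at this
      exact_mod_cast this
    have hlog : Nat.log 2 (2 * x 1) = Nat.log 2 (x 1) + 1 := by
      rw [mul_comm]
      exact Nat.log_mul_base (by norm_num) (hx 1).ne'
    have key : ((Nat.log 2 (x 1) : Fin 2)) = ((Nat.log 2 (x 1) + 1 : ℕ) : Fin 2) := by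
      have e1 := hmono 0 1
      have e2 := ymono 0 1
      rw [h0, h1] at e2
      rw [← hlog]
      exact e1.symm.trans e2
    have : (Nat.log 2 (x 1)) % 2 = (Nat.log 2 (x 1) + 1) % 2 := by
      have := congrArg Fin.val key
      rwa [Fin.val_natCast, Fin.val_natCast] at this
    omega
end

section
/- Let $u,v$ be positive integers and let $A$ be a $u\times v$ matrix with rational entries such that no row of $A$ is identically zero and there is a positive rational $c$ such that the first nonzero entry of every row of $A$ equals $c$. Then $A$ is doubly image partition regular. -/
open Matrix

open Combinatorics Function

private lemma fin_homothetic (K : ℕ) (κ : Type) [Finite κ] :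
    ∃ M : ℕ, 0 < M ∧ ∀ φ : ℕ → κ, ∃ a b : ℕ, 0 < a ∧ a ≤ M ∧ b ≤ M ∧
      ∃ k, ∀ s ≤ K, φ (a * s + b) = k := by
  classical
  obtain ⟨ι, _inst, hι⟩ := Line.exists_mono_in_high_dimension (↥(Finset.range (K+1))) κ
  refine ⟨Fintype.card ι * (K + 1) + 1, Nat.succ_pos _, fun φ => ?_⟩
  obtain ⟨l, k, hl⟩ := hι fun v => φ (∑ i, (v i : ℕ))
  set s : Finset ι := Finset.univ.filter (fun i => l.idxFun i = none) with hs
  set a : ℕ := s.card with ha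
  set b : ℕ := ∑ i ∈ sᶜ, ((l.idxFun i).map (fun (m : ↥(Finset.range (K+1))) => (m : ℕ))).getD 0
    with hb
  have hwild : l.proper.choose ∈ s := by
    rw [hs, Finset.mem_filter]; exact ⟨Finset.mem_univ _, l.proper.choose_spec⟩
  have hapos : 0 < a := Finset.card_pos.mpr ⟨_, hwild⟩
  have haM : a ≤ Fintype.card ι * (K + 1) + 1 := by
    have := Finset.card_le_univ s
    calc a ≤ Fintype.card ι := this
    _ ≤ Fintype.card ι * (K+1) + 1 := by nlinarith
  have hbM : b ≤ Fintype.card ι * (K + 1) + 1 := by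
    have : ∀ i ∈ sᶜ, ((l.idxFun i).map (fun (m : ↥(Finset.range (K+1))) => (m : ℕ))).getD 0 ≤ K := by
      intro i _
      cases h : l.idxFun i with
      | none => simp
      | some m =>
        have := m.2
        simp only [Finset.mem_range] at this
        simp [h]
        omega
    calc b ≤ ∑ _i ∈ sᶜ, K := Finset.sum_le_sum this
    _ = sᶜ.card * K := by rw [Finset.sum_const, smul_eq_mul]
    _ ≤ Fintype.card ι * (K+1) + 1 := by
        have := Finset.card_le_univ sᶜ
        nlinarith
  refine ⟨a, b, hapos, haM, hbM, k, ?_⟩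
  intro x hx
  have hxm : x ∈ Finset.range (K+1) := Finset.mem_range.mpr (by omega)
  rw [← hl ⟨x, hxm⟩]
  congr 1
  rw [← Finset.sum_add_sum_compl s]
  congr 1
  · rw [Finset.sum_congr rfl (fun i hi => ?_), Finset.sum_const, smul_eq_mul, mul_comm]
    rw [hs, Finset.mem_filter] at hi
    show ((l.idxFun i).getD _ : ℕ) = x
    rw [hi.2]
    rfl
  · apply Finset.sum_congr rfl
    intro i hi
    rw [hs, Finset.compl_filter, Finset.mem_filter] at hi
    obtain ⟨y, hy⟩ := Option.ne_none_iff_exists.mp hi.right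
    simp_rw [← hy, Option.map_some, Option.getD]
    show (y : ℕ) = ((l.idxFun i).getD _ : ℕ)
    rw [← hy]
    rfl

def combo {m : ℕ} (c : ℕ) (x : Fin m → ℕ) (t : Fin m) (lam : Fin m → ℤ) : ℤ :=
  (c : ℤ) * (x t : ℤ) + ∑ s, if t < s then lam s * (x s : ℤ) else 0

lemma levelwise (κ : Type) [Finite κ] (m : ℕ) : ∀ (p c : ℕ), 0 < c →
    ∃ N : ℕ, 0 < N ∧ ∀ φ : ℕ → κ, ∃ (x : Fin m → ℕ) (k : Fin m → κ),
      (∀ t, 0 < x t ∧ x t ≤ N) ∧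
      ∀ t (lam : Fin m → ℤ), (∀ s, |lam s| ≤ (p : ℤ)) →
        0 < combo c x t lam ∧ combo c x t lam ≤ (N : ℤ) ∧
          φ (combo c x t lam).toNat = k t := by
  induction m with
  | zero =>
    intro p c hc
    exact ⟨1, one_pos, fun φ => ⟨Fin.elim0, Fin.elim0, fun t => t.elim0, fun t => t.elim0⟩⟩
  | succ m IH =>
    intro p c hc
    obtain ⟨N₀, hN₀, hIH⟩ := IH p c hc
    set J : ℕ := p * m * N₀ + 1 with hJ
    obtain ⟨M, hM, hHom⟩ := fin_homothetic (2 * J) κ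
    refine ⟨c * (M * (2 * J + 1 + N₀)), by positivity, fun φ => ?_⟩
    set N : ℕ := c * (M * (2 * J + 1 + N₀)) with hN
    have hMN : M * (2 * J + 1) ≤ N := by
      calc M * (2 * J + 1) ≤ M * (2 * J + 1 + N₀) := Nat.mul_le_mul_left _ (by omega)
      _ ≤ c * (M * (2 * J + 1 + N₀)) := Nat.le_mul_of_pos_left _ hc
    obtain ⟨a, b, ha, haM, hbM, k₁, hab⟩ := hHom (fun n => φ (c * n))
    obtain ⟨y, k', hy, hcomb⟩ := hIH (fun n => φ (c * a * n))
    set d : ℕ := c * a with hd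
    have hdN : d * N₀ ≤ N := by
      calc d * N₀ = c * (a * N₀) := by rw [hd]; ring
      _ ≤ c * (M * (2 * J + 1 + N₀)) := by
          apply Nat.mul_le_mul_left
          calc a * N₀ ≤ M * N₀ := Nat.mul_le_mul_right _ haM
          _ ≤ M * (2 * J + 1 + N₀) := Nat.mul_le_mul_left _ (by omega)
    have hcjb : ∀ j ≤ 2 * J, c * (a * j + b) ≤ N := by
      intro j hj
      calc c * (a * j + b) ≤ c * (M * (2 * J) + M) := by
            apply Nat.mul_le_mul_left
            have h1 : a * j ≤ M * (2 * J) :=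
              Nat.mul_le_mul haM hj
            omega
      _ = c * (M * (2 * J + 1)) := by ring
      _ ≤ c * (M * (2 * J + 1 + N₀)) := by
            apply Nat.mul_le_mul_left
            exact Nat.mul_le_mul_left _ (by omega)
    refine ⟨Fin.cons (a * J + b) (fun s => d * y s), Fin.cons k₁ k', ?_, ?_⟩
    · intro t
      refine Fin.cases ?_ ?_ t
      · simp only [Fin.cons_zero]
        constructor
        · have : 0 < a * J := Nat.mul_pos ha (by omega)
          omega
        · have h1 : a * J + b ≤ M * (2 * J) + M := by
            have h2 : a * J ≤ M * (2 * J) := Nat.mul_le_mul haM (by omega)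
            omega
          calc a * J + b ≤ M * (2 * J) + M := h1
          _ = M * (2 * J + 1) := by ring
          _ ≤ N := hMN
      · intro s
        simp only [Fin.cons_succ]
        have h1 := (hy s).1
        have h2 := (hy s).2
        have hd0 : 0 < d := Nat.mul_pos hc ha
        constructor
        · positivity
        · calc d * y s ≤ d * N₀ := Nat.mul_le_mul_left _ h2
          _ ≤ N := hdN
    · intro t
      refine Fin.cases ?_ ?_ t
      · intro lam hlam
        set T : ℤ := ∑ s : Fin m, lam s.succ * (y s : ℤ) with hT
        have hTbound : |T| ≤ (p : ℤ) * m * N₀ := by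
          calc |T| ≤ ∑ s : Fin m, |lam s.succ * (y s : ℤ)| := Finset.abs_sum_le_sum_abs _ _
          _ ≤ ∑ _s : Fin m, (p : ℤ) * N₀ := by
              apply Finset.sum_le_sum
              intro s _
              rw [abs_mul]
              have h1 : |lam s.succ| ≤ (p : ℤ) := hlam s.succ
              have h2 : |(y s : ℤ)| ≤ (N₀ : ℤ) := by
                rw [abs_of_nonneg (by positivity)]
                exact_mod_cast (hy s).2
              exact mul_le_mul h1 h2 (abs_nonneg _) (by positivity)
          _ = (p : ℤ) * m * N₀ := by
              rw [Finset.sum_const, Finset.card_univ, Fintype.card_fin, nsmul_eq_mul]; ring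
        have hcombo0 : combo c (Fin.cons (a * J + b) (fun s => d * y s)) 0 lam
            = (c : ℤ) * ((a : ℤ) * ((J : ℤ) + T) + b) := by
          rw [combo, Fin.sum_univ_succ]
          simp only [Fin.cons_zero, Fin.cons_succ]
          rw [if_neg (lt_irrefl _)]
          have hpos : ∀ s : Fin m, (0 : Fin (m+1)) < s.succ := fun s => Fin.succ_pos s
          simp only [hpos, if_true]
          have hsum : ∑ s : Fin m, lam s.succ * ((d * y s : ℕ) : ℤ) = (d : ℤ) * T := by
            rw [hT, Finset.mul_sum]
            apply Finset.sum_congr rfl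
            intro s _
            push_cast
            ring
          rw [hsum, hd]
          push_cast
          ring
        have hJc : (J : ℤ) = (p:ℤ) * m * N₀ + 1 := by rw [hJ]; push_cast; ring
        have hJT1 : 1 ≤ (J : ℤ) + T := by
          have := neg_le_of_abs_le hTbound
          omega
        have hJT2 : (J : ℤ) + T ≤ 2 * J := by
          have := le_of_abs_le hTbound
          omega
        set j : ℕ := ((J : ℤ) + T).toNat with hj
        have hjc : ((j : ℕ) : ℤ) = (J : ℤ) + T := Int.toNat_of_nonneg (by omega)
        have hjle : j ≤ 2 * J := by omega
        have hceq : combo c (Fin.cons (a * J + b) (fun s => d * y s)) 0 lam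
            = ((c * (a * j + b) : ℕ) : ℤ) := by
          rw [hcombo0, ← hjc]; push_cast; ring
        refine ⟨?_, ?_, ?_⟩
        · rw [hceq]
          have h0 : 0 < c * (a * j + b) := by
            have h1 : 1 ≤ j := by omega
            have h2 : 0 < a * j := Nat.mul_pos ha h1
            positivity
          exact_mod_cast h0
        · rw [hceq]
          exact_mod_cast hcjb j hjle
        · rw [hceq, Int.toNat_natCast, Fin.cons_zero]
          exact hab j hjle
      · intro t lam hlam
        have key : combo c (Fin.cons (a * J + b) (fun s => d * y s)) t.succ lam
            = (d : ℤ) * combo c y t (fun s => lam s.succ) := by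
          rw [combo, combo, Fin.sum_univ_succ]
          simp only [Fin.cons_succ, Fin.cons_zero]
          rw [if_neg (Fin.not_lt.mpr (Fin.zero_le _))]
          have hterm : ∀ s : Fin m,
              (if t.succ < s.succ then lam s.succ * ((d * y s : ℕ) : ℤ) else 0)
              = (d : ℤ) * (if t < s then lam s.succ * (y s : ℤ) else 0) := by
            intro s
            simp only [Fin.succ_lt_succ_iff]
            by_cases h : t < s
            · simp only [h, if_true]
              push_cast
              ring
            · simp [h]
          rw [Finset.sum_congr rfl (fun s _ => hterm s), ← Finset.mul_sum]
          push_cast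
          ring
        obtain ⟨h1, h2, h3⟩ := hcomb t (fun s => lam s.succ) (fun s => hlam s.succ)
        have hd0 : 0 < d := Nat.mul_pos hc ha
        refine ⟨?_, ?_, ?_⟩
        · rw [key]; positivity
        · rw [key]
          calc (d:ℤ) * combo c y t (fun s => lam s.succ) ≤ (d:ℤ) * N₀ :=
              mul_le_mul_of_nonneg_left h2 (by positivity)
          _ ≤ (N : ℤ) := by exact_mod_cast hdN
        · have htn : (((d : ℤ) * combo c y t (fun s => lam s.succ))).toNat
              = d * (combo c y t (fun s => lam s.succ)).toNat := by
            rcases Int.eq_ofNat_of_zero_le (le_of_lt h1) with ⟨n, hn⟩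
            rw [hn, ← Nat.cast_mul, Int.toNat_natCast, Int.toNat_natCast]
          rw [key, htn, Fin.cons_succ]
          exact h3

lemma single_colour (κ : Type) [Finite κ] (m p c : ℕ) (hc : 0 < c) (φ : ℕ → κ) :
    ∃ x : Fin m → ℕ, (∀ t, 0 < x t) ∧ ∃ k : κ,
      ∀ t (lam : Fin m → ℤ), (∀ s, |lam s| ≤ (p:ℤ)) →
        0 < combo c x t lam ∧ φ (combo c x t lam).toNat = k := by
  classical
  cases nonempty_fintype κ
  set m' : ℕ := Fintype.card κ * m + 1 with hm'
  obtain ⟨N, hN, hlev⟩ := levelwise κ m' p c hc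
  obtain ⟨x, k, hx, hcomb⟩ := hlev φ
  have hcard : Fintype.card κ * m < Fintype.card (Fin m') := by
    rw [Fintype.card_fin]; omega
  obtain ⟨k₀, hk₀⟩ := Fintype.exists_lt_card_fiber_of_mul_lt_card k hcard
  obtain ⟨s, hsub, hscard⟩ := Finset.exists_subset_card_eq (le_of_lt hk₀ : m ≤ _)
  set g := s.orderEmbOfFin hscard with hg
  have hgfib : ∀ t : Fin m, k (g t) = k₀ := by
    intro t
    have hmem : g t ∈ s := s.orderEmbOfFin_mem hscard t
    have := hsub hmem
    simpa using (Finset.mem_filter.mp this).2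
  refine ⟨fun t => x (g t), fun t => (hx (g t)).1, k₀, ?_⟩
  intro t lam' hlam'
  set lam : Fin m' → ℤ := fun j => if h : ∃ u, g u = j then lam' h.choose else 0 with hlam
  have hlamg : ∀ u : Fin m, lam (g u) = lam' u := by
    intro u
    have hex : ∃ u', g u' = g u := ⟨u, rfl⟩
    rw [hlam]
    simp only
    rw [dif_pos hex]
    have : hex.choose = u := g.injective hex.choose_spec
    rw [this]
  have hlambd : ∀ j, |lam j| ≤ (p : ℤ) := by
    intro j
    rw [hlam]
    by_cases h : ∃ u, g u = j
    · simp only [dif_pos h]; exact hlam' _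
    · simp only [dif_neg h]; positivity
  have hkey : combo c x (g t) lam = combo c (fun u => x (g u)) t lam' := by
    rw [combo, combo]
    congr 1
    have h1 : ∑ j : Fin m', (if g t < j then lam j * (x j : ℤ) else 0)
        = ∑ j ∈ Finset.univ.image g, (if g t < j then lam j * (x j : ℤ) else 0) := by
      refine (Finset.sum_subset (Finset.subset_univ _) ?_).symm
      intro j _ hj
      have : ¬ ∃ u, g u = j := by
        intro ⟨u, hu⟩
        exact hj (Finset.mem_image.mpr ⟨u, Finset.mem_univ _, hu⟩)
      rw [hlam]
      simp only [dif_neg this, zero_mul, ite_self]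
    rw [h1, Finset.sum_image (fun a _ b _ h => g.injective h)]
    apply Finset.sum_congr rfl
    intro u _
    simp only [hlamg u, g.lt_iff_lt]
  obtain ⟨h1, _h2, h3⟩ := hcomb (g t) lam hlambd
  rw [hkey] at h1 h3
  rw [hgfib t] at h3
  exact ⟨h1, h3⟩

lemma int_ipr (v : ℕ) (ι : Type) [Fintype ι] (C : Matrix ι (Fin v) ℤ) (c : ℕ) (hc : 0 < c)
    (hfe : ∀ i, ∃ j, C i j = (c : ℤ) ∧ ∀ j' < j, C i j' = 0)
    (κ : Type) [Finite κ] (φ : ℕ → κ) (Q : ℕ) (hQ : 0 < Q) :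
    ∃ x : Fin v → ℕ, (∀ j, 0 < x j) ∧ (∀ j, Q ∣ x j) ∧ ∃ k, ∀ i,
      0 < C.mulVec (fun j => ((x j : ℤ))) i ∧
        φ (C.mulVec (fun j => (x j : ℤ)) i).toNat = k := by
  classical
  set p : ℕ := ∑ i : ι, ∑ j, (C i j).natAbs with hp
  have hpb : ∀ i j, |C i j| ≤ (p : ℤ) := by
    intro i j
    have h1 : (C i j).natAbs ≤ p := by
      calc (C i j).natAbs ≤ ∑ j', (C i j').natAbs :=
            Finset.single_le_sum (f := fun j' => (C i j').natAbs)
              (fun j' _ => Nat.zero_le _) (Finset.mem_univ j)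
      _ ≤ p := Finset.single_le_sum (f := fun i => ∑ j', (C i j').natAbs)
            (fun i' _ => Nat.zero_le _) (Finset.mem_univ i)
    calc |C i j| = ((C i j).natAbs : ℤ) := Int.abs_eq_natAbs _
    _ ≤ (p : ℤ) := by exact_mod_cast h1
  obtain ⟨x₀, hx₀, k, hcomb⟩ := single_colour κ v p c hc (fun n => φ (Q * n))
  refine ⟨fun j => Q * x₀ j, fun j => Nat.mul_pos hQ (hx₀ j), fun j => ⟨x₀ j, rfl⟩, k, ?_⟩
  intro i
  obtain ⟨t, hct, hzero⟩ := hfe i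
  have hkey : C.mulVec (fun j => ((Q * x₀ j : ℕ) : ℤ)) i
      = (Q : ℤ) * combo c x₀ t (fun s => C i s) := by
    rw [Matrix.mulVec, dotProduct, combo]
    rw [mul_add, Finset.mul_sum]
    have hsplit : ∀ j : Fin v, C i j * ((Q * x₀ j : ℕ) : ℤ)
        = (if j = t then (Q:ℤ) * ((c:ℤ) * (x₀ t : ℤ)) else 0)
          + (Q:ℤ) * (if t < j then C i j * (x₀ j : ℤ) else 0) := by
      intro j
      rcases lt_trichotomy j t with h | h | h
      · rw [hzero j h]
        rw [if_neg (ne_of_lt h), if_neg (not_lt_of_gt h)]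
        ring
      · subst h
        rw [if_pos rfl, if_neg (lt_irrefl _), hct]
        push_cast
        ring
      · rw [if_neg (ne_of_gt h), if_pos h]
        push_cast
        ring
    rw [Finset.sum_congr rfl (fun j _ => hsplit j), Finset.sum_add_distrib]
    rw [Finset.sum_ite_eq' Finset.univ t (fun _ => (Q:ℤ) * ((c:ℤ) * (x₀ t : ℤ)))]
    simp [Finset.mem_univ]
  obtain ⟨h1, h3⟩ := hcomb t (fun s => C i s) (fun s => hpb i s)
  constructor
  · rw [hkey]; positivity
  · rw [hkey]
    have htn : ((Q : ℤ) * combo c x₀ t (fun s => C i s)).toNat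
        = Q * (combo c x₀ t (fun s => C i s)).toNat := by
      rcases Int.eq_ofNat_of_zero_le (le_of_lt h1) with ⟨n, hn⟩
      rw [hn, ← Nat.cast_mul, Int.toNat_natCast, Int.toNat_natCast]
    rw [htn]
    exact h3

lemma den_mul_self (e : ℚ) : (e.den : ℚ) * e = (e.num : ℚ) := by
  have hd : ((e.den : ℚ)) ≠ 0 := by
    have := e.pos
    positivity
  calc (e.den : ℚ) * e = (e.den : ℚ) * ((e.num : ℚ) / (e.den : ℚ)) := by
        rw [Rat.num_div_den]
  _ = (e.num : ℚ) := by rw [mul_comm, div_mul_cancel₀ _ hd]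


theorem stmt_11 (u v : ℕ) (hu : 0 < u) (hv : 0 < v) (A : Matrix (Fin u) (Fin v) ℚ)
    (hrows : ∀ i, ∃ j, A i j ≠ 0) (c : ℚ) (hc : 0 < c)
    (hfirst : ∀ i, ∃ j, A i j = c ∧ ∀ j' < j, A i j' = 0) :
    DoublyIPR A := by
  classical
  intro r φ
  set a' : ℕ := c.num.toNat with ha'
  set b' : ℕ := c.den with hb'
  have hnum : 0 < c.num := Rat.num_pos.mpr hc
  have ha'pos : 0 < a' := by rw [ha']; omega
  have ha'c : ((a' : ℕ) : ℚ) = (c.num : ℚ) := by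
    have : ((a' : ℕ) : ℤ) = c.num := by rw [ha']; omega
    exact_mod_cast this
  have hb'pos : 0 < b' := c.pos
  have hbc : (b' : ℚ) * c = (a' : ℚ) := by
    rw [ha'c, hb']
    exact den_mul_self c
  set q : ℕ := ∏ i : Fin u, ∏ j : Fin v, (A i j).den with hq
  have hqpos : 0 < q := by
    apply Finset.prod_pos
    intro i _
    exact Finset.prod_pos fun j _ => (A i j).pos
  have hqdvd : ∀ i j, (A i j).den ∣ q := by
    intro i j
    calc (A i j).den ∣ ∏ j', (A i j').den := Finset.dvd_prod_of_mem _ (Finset.mem_univ j)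
    _ ∣ q := Finset.dvd_prod_of_mem (fun i' => ∏ j', (A i' j').den) (Finset.mem_univ i)
  -- integer entries
  have hz : ∀ i j, ∃ z : ℤ, (z : ℚ) = (q : ℚ) * (b' : ℚ) * A i j := by
    intro i j
    obtain ⟨q₀, hq₀⟩ := hqdvd i j
    refine ⟨q₀ * b' * (A i j).num, ?_⟩
    have hden : ((A i j).den : ℚ) * A i j = ((A i j).num : ℚ) := den_mul_self (A i j)
    push_cast
    rw [← hden, hq₀]
    push_cast
    ring
  choose z hzq using hz
  set c₀ : ℕ := q * a' with hc₀
  have hc₀pos : 0 < c₀ := Nat.mul_pos hqpos ha'pos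
  set Q : ℕ := q * b' with hQdef
  have hQpos : 0 < Q := Nat.mul_pos hqpos hb'pos
  -- the big matrix
  set C : Matrix (Fin v ⊕ Fin u) (Fin v) ℤ := fun i j =>
    Sum.elim (fun j' => if j = j' then (c₀ : ℤ) else 0) (fun i' => z i' j) i with hC
  have hfe : ∀ i, ∃ j, C i j = (c₀ : ℤ) ∧ ∀ j' < j, C i j' = 0 := by
    rintro (j' | i)
    · exact ⟨j', by simp [hC], fun j'' hj'' => by simp [hC, Fin.ne_of_lt hj'']⟩
    · obtain ⟨j, hcj, hzero⟩ := hfirst i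
      refine ⟨j, ?_, ?_⟩
      · have h1 : ((z i j : ℤ) : ℚ) = ((c₀ : ℕ) : ℚ) := by
          rw [hzq i j, hcj, hc₀]
          push_cast
          rw [mul_assoc, hbc]
        have h2 : (z i j : ℤ) = ((c₀ : ℕ) : ℤ) := by exact_mod_cast h1
        simpa [hC] using h2
      · intro j'' hj''
        have h1 : ((z i j'' : ℤ) : ℚ) = 0 := by
          rw [hzq i j'', hzero j'' hj'']
          ring
        have h2 : (z i j'' : ℤ) = 0 := by exact_mod_cast h1
        simpa [hC] using h2
  -- the colouring
  set ψ : ℕ → Fin r × Fin r := fun n => (φ (n / c₀), φ (n / Q)) with hψ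
  obtain ⟨x, hxpos, hxdvd, k, himg⟩ :=
    int_ipr v (Fin v ⊕ Fin u) C c₀ hc₀pos hfe (Fin r × Fin r) ψ Q hQpos
  choose x' hx' using hxdvd
  -- identity rows
  have hrowl : ∀ j : Fin v, C.mulVec (fun j'' => ((x j'' : ℕ) : ℤ)) (Sum.inl j)
      = ((c₀ * x j : ℕ) : ℤ) := by
    intro j
    rw [Matrix.mulVec, dotProduct]
    have : ∀ j'' : Fin v, C (Sum.inl j) j'' * ((x j'' : ℕ) : ℤ)
        = if j'' = j then ((c₀ : ℕ) : ℤ) * (x j'' : ℕ) else 0 := by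
      intro j''
      by_cases h : j'' = j
      · subst h; simp [hC]
      · have : ¬ (j = j'') := fun hh => h hh.symm
        simp [hC, this, h]
    rw [Finset.sum_congr rfl (fun j'' _ => this j'')]
    rw [Finset.sum_ite_eq' Finset.univ j (fun j'' => ((c₀ : ℕ) : ℤ) * (x j'' : ℕ))]
    simp
  have hmonox : ∀ j : Fin v, φ (x j) = k.1 := by
    intro j
    have h := (himg (Sum.inl j)).2
    rw [hrowl j] at h
    rw [Int.toNat_natCast] at h
    have : ψ (c₀ * x j) = k := h
    have h1 := congrArg Prod.fst this
    rw [hψ] at h1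
    simpa [Nat.mul_div_cancel_left _ hc₀pos] using h1
  -- matrix rows
  set w : Fin u → ℤ := fun i => ∑ j, z i j * (x' j : ℤ) with hw
  have hrowr : ∀ i : Fin u, C.mulVec (fun j'' => ((x j'' : ℕ) : ℤ)) (Sum.inr i)
      = (Q : ℤ) * w i := by
    intro i
    rw [Matrix.mulVec, dotProduct, hw, Finset.mul_sum]
    apply Finset.sum_congr rfl
    intro j _
    rw [hx' j]
    simp only [hC, Sum.elim_inr]
    push_cast
    ring
  have hwpos : ∀ i, 0 < w i := by
    intro i
    have h := (himg (Sum.inr i)).1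
    rw [hrowr i] at h
    by_contra hcon
    push_neg at hcon
    have : (Q : ℤ) * w i ≤ 0 :=
      mul_nonpos_of_nonneg_of_nonpos (by positivity) hcon
    omega
  set y : Fin u → ℕ := fun i => (w i).toNat with hy
  have hyw : ∀ i, ((y i : ℕ) : ℤ) = w i := fun i => Int.toNat_of_nonneg (le_of_lt (hwpos _))
  have hmonoy : ∀ i : Fin u, φ (y i) = k.2 := by
    intro i
    have h := (himg (Sum.inr i)).2
    rw [hrowr i] at h
    have htn : ((Q : ℤ) * w i).toNat = Q * y i := by
      rw [← hyw i, ← Nat.cast_mul, Int.toNat_natCast]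
    rw [htn] at h
    have h2 := congrArg Prod.snd (h : ψ (Q * y i) = k)
    rw [hψ] at h2
    simpa [Nat.mul_div_cancel_left _ hQpos] using h2
  refine ⟨x, hxpos, fun i j => by rw [hmonox i, hmonox j], y, fun i => ?_, fun i => ?_,
    fun i j => by rw [hmonoy i, hmonoy j]⟩
  · have := hwpos i
    show 0 < (w i).toNat
    omega
  · -- (y i : ℚ) = A.mulVec x i
    rw [Matrix.mulVec, dotProduct]
    have h1 : ∀ j, A i j * ((x j : ℕ) : ℚ) = ((z i j : ℤ) : ℚ) * ((x' j : ℕ) : ℚ) := by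
      intro j
      rw [hx' j, hzq i j, hQdef]
      push_cast
      ring
    rw [Finset.sum_congr rfl (fun j _ => h1 j)]
    have h2 : ∑ j, ((z i j : ℤ) : ℚ) * ((x' j : ℕ) : ℚ) = ((w i : ℤ) : ℚ) := by
      rw [hw]
      push_cast
      rfl
    rw [h2, ← hyw i]
    push_cast
    ring
end

section
/- Let $u,v,w$ be positive integers, let $A$ be a $u\times v$ and $B$ a $u\times w$ matrix over $\mathbb{Q}$. If there exists a positive rational $c$ such that the $u\times(v+w)$ matrix $(A \; cB)$ is kernel partition regular, then $(A,B)$ is doubly kernel partition regular: for every finite colouring of $\mathbb{N}$ there exist vectors $\vec x \in \mathbb{N}^v$ and $\vec y \in \mathbb{N}^w$, each monochromatic (possibly in different colours), with $A\vec x + B\vec y = \vec 0$. -/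
open Matrix

/-- `(A, B)` is doubly kernel partition regular. -/
def DoublyKPR {u v w : ℕ} (A : Matrix (Fin u) (Fin v) ℚ) (B : Matrix (Fin u) (Fin w) ℚ) : Prop :=
  ∀ (r : ℕ) (φ : ℕ → Fin r), ∃ (x : Fin v → ℕ) (y : Fin w → ℕ),
    (∀ i, 0 < x i) ∧ (∀ i, 0 < y i) ∧
    (∀ i j, φ (x i) = φ (x j)) ∧ (∀ i j, φ (y i) = φ (y j)) ∧
    A.mulVec (fun j => (x j : ℚ)) + B.mulVec (fun j => (y j : ℚ)) = 0

theorem stmt_15 (u v w : ℕ) (hu : 0 < u) (hv : 0 < v) (hw : 0 < w)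
    (A : Matrix (Fin u) (Fin v) ℚ) (B : Matrix (Fin u) (Fin w) ℚ)
    (c : ℚ) (hc : 0 < c) (hKPR : KPR (Matrix.fromCols A (c • B))) :
    DoublyKPR A B := by
  intro r φ
  set p : ℕ := c.num.toNat with hpdef
  have hn : (0:ℤ) < c.num := Rat.num_pos.2 hc
  have hp : 0 < p := by rw [hpdef]; omega
  have hq : 0 < c.den := c.pos
  obtain ⟨z, hzpos, hzmono, hzker⟩ :=
    hKPR (r * r) (fun n => finProdFinEquiv (φ (c.den * n), φ (p * n)))
  refine ⟨fun i => c.den * z (Sum.inl i), fun i => p * z (Sum.inr i),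
    fun i => Nat.mul_pos hq (hzpos _), fun i => Nat.mul_pos hp (hzpos _),
    ?_, ?_, ?_⟩
  · intro i j
    have := hzmono (Sum.inl i) (Sum.inl j)
    simpa using congrArg (fun t => (finProdFinEquiv.symm t).1) this
  · intro i j
    have := hzmono (Sum.inr i) (Sum.inr j)
    simpa using congrArg (fun t => (finProdFinEquiv.symm t).2) this
  · have hkey : (fun i => ((z i : ℚ))) = Sum.elim (fun i => (z (Sum.inl i) : ℚ))
        (fun i => (z (Sum.inr i) : ℚ)) := by
      funext i; cases i <;> rfl
    rw [hkey, Matrix.fromCols_mulVec_sumElim] at hzker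
    have hpq : (p : ℚ) = c * c.den := by
      have h1 : ((c.num.toNat : ℤ) : ℚ) = (c.num : ℚ) := by
        rw [Int.toNat_of_nonneg (le_of_lt (Rat.num_pos.2 hc))]
      calc (p : ℚ) = ((c.num.toNat : ℤ) : ℚ) := by rw [hpdef]; push_cast; ring
        _ = (c.num : ℚ) := h1
        _ = c * c.den := by exact_mod_cast (Rat.mul_den_eq_num c).symm
    have : (c.den : ℚ) • (A.mulVec (fun i => (z (Sum.inl i) : ℚ)) +
        (c • B).mulVec (fun i => (z (Sum.inr i) : ℚ))) = 0 := by rw [hzker, smul_zero]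
    rw [smul_add, Matrix.smul_mulVec, smul_smul] at this
    convert this using 2
    · ext k
      simp [Matrix.mulVec, dotProduct, Finset.mul_sum]
      congr 1; funext j; push_cast; ring
    · ext k
      simp [Matrix.mulVec, dotProduct, Finset.mul_sum, hpq]
      congr 1; funext j; push_cast; ring
end
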